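/- Let Γ be a subgroup of ℤ^r with saturation Γ̄. Then the connected component of the identity element in the topological group T_Γ = {t ∈ (ℂˣ)^r : χ(t) = 1 for all χ ∈ Γ} is exactly T_{Γ̄} = {t : χ(t) = 1 for all χ ∈ Γ̄}; in particular T_{Γ̄} is connected. (Part of Proposition 3.1: the connected components of the common kernel of the characters in Γ are the cosets of the common kernel of the characters in Γ̄.) -/

import Mathlib

/-- The character of the torus `T = (ℂˣ)^r` associated to `χ ∈ ℤ^r`:
`t ↦ ∏ⱼ tⱼ^{χⱼ}`. -/
noncomputable def charMap {r : ℕ} (χ : Fin r → ℤ) (t : Fin r → ℂˣ) : ℂˣ :=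
  ∏ j, (t j) ^ (χ j)

/-- For a subgroup `Γ ≤ ℤ^r`, the subgroup `T_Γ = {t ∈ T : χ(t) = 1 ∀ χ ∈ Γ}`. -/
def torusKer {r : ℕ} (Γ : AddSubgroup (Fin r → ℤ)) : Set (Fin r → ℂˣ) :=
  {t | ∀ χ ∈ Γ, charMap χ t = 1}

/-- The saturation `Γ̄ = {χ ∈ ℤ^r : mχ ∈ Γ for some m > 0}` of a subgroup `Γ ≤ ℤ^r`. -/
def saturation {r : ℕ} (Γ : AddSubgroup (Fin r → ℤ)) : AddSubgroup (Fin r → ℤ) where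
  carrier := {χ | ∃ m : ℤ, 0 < m ∧ m • χ ∈ Γ}
  zero_mem' := ⟨1, one_pos, by simpa using Γ.zero_mem⟩
  add_mem' := by
    rintro x y ⟨mx, hmx, hx⟩ ⟨my, hmy, hy⟩
    refine ⟨mx * my, mul_pos hmx hmy, ?_⟩
    have : (mx * my) • (x + y) = my • (mx • x) + mx • (my • y) := by
      rw [smul_add, smul_smul, smul_smul, mul_comm my mx]
    rw [this]
    exact Γ.add_mem (Γ.zsmul_mem hx my) (Γ.zsmul_mem hy mx)
  neg_mem' := by
    rintro x ⟨m, hm, hx⟩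
    exact ⟨m, hm, by simpa [smul_neg] using Γ.neg_mem hx⟩

instance : ConnectedSpace ℂˣ := by
  rw [connectedSpace_iff_univ]
  refine ⟨⟨1, trivial⟩, ?_⟩
  have hval : Topology.IsInducing (Units.val : ℂˣ → ℂ) := Units.isEmbedding_val₀.toIsInducing
  rw [← hval.isPreconnected_image]
  have : Units.val '' (Set.univ : Set ℂˣ) = {(0 : ℂ)}ᶜ := by
    ext z
    simp only [Set.image_univ, Set.mem_range, Set.mem_compl_iff, Set.mem_singleton_iff]
    constructor
    · rintro ⟨u, rfl⟩; exact u.ne_zero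
    · intro hz; exact ⟨Units.mk0 z hz, rfl⟩
  rw [this]
  exact (isConnected_compl_singleton_of_one_lt_rank
    (Complex.rank_real_complex ▸ Nat.one_lt_ofNat) 0).isPreconnected

namespace CharAux

variable {r : ℕ}

theorem charMap_one (χ : Fin r → ℤ) : charMap χ 1 = 1 := by simp [charMap]

theorem zpow_finsum {G : Type*} [CommGroup G] (a : G) {ι : Type*} (s : Finset ι) (f : ι → ℤ) :
    a ^ (∑ i ∈ s, f i) = ∏ i ∈ s, a ^ f i := by
  induction s using Finset.cons_induction with
  | empty => simp
  | cons i s hi ih => simp [zpow_add, ih]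

theorem charMap_sum_zsmul {n : ℕ} (c : Fin n → ℤ) (v : Fin n → Fin r → ℤ) (t : Fin r → ℂˣ) :
    charMap (∑ i, c i • v i) t = ∏ i, charMap (v i) t ^ c i := by
  unfold charMap
  simp only [Finset.sum_apply, Pi.smul_apply, smul_eq_mul, zpow_finsum]
  rw [Finset.prod_comm]
  refine Finset.prod_congr rfl fun i _ => ?_
  rw [← Finset.prod_zpow]
  refine Finset.prod_congr rfl fun j _ => ?_
  rw [← zpow_mul, mul_comm]

theorem charMap_zsmul (m : ℤ) (χ : Fin r → ℤ) (t : Fin r → ℂˣ) :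
    charMap (m • χ) t = charMap χ t ^ m := by
  unfold charMap
  rw [← Finset.prod_zpow]
  refine Finset.prod_congr rfl fun j _ => ?_
  rw [← zpow_mul, Pi.smul_apply, smul_eq_mul, mul_comm]

theorem charMap_single (j : Fin r) (t : Fin r → ℂˣ) : charMap (Pi.single j 1) t = t j := by
  classical
  rw [charMap, Finset.prod_eq_single j]
  · simp
  · intro k _ hk; simp [Pi.single_eq_of_ne hk]
  · simp

theorem continuous_charMap (χ : Fin r → ℤ) : Continuous (charMap χ) :=
  continuous_finset_prod _ fun j _ => (continuous_apply j).zpow (χ j)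

noncomputable def psiMap (v : Fin r → Fin r → ℤ) (t : Fin r → ℂˣ) : Fin r → ℂˣ :=
  fun i => charMap (v i) t

theorem continuous_psiMap (v : Fin r → Fin r → ℤ) : Continuous (psiMap v) :=
  continuous_pi fun i => continuous_charMap (v i)

theorem charMap_psiMap (χ : Fin r → ℤ) (v : Fin r → Fin r → ℤ) (t : Fin r → ℂˣ) :
    charMap χ (psiMap v t) = charMap (∑ i, χ i • v i) t := by
  rw [charMap_sum_zsmul]; rfl

variable (b : Module.Basis (Fin r) ℤ (Fin r → ℤ))

/-- Coordinates of the standard basis vectors in the basis `b`. -/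
noncomputable def wMap : Fin r → Fin r → ℤ := fun j i => b.repr (Pi.single j 1) i

theorem psi_left_inv (t : Fin r → ℂˣ) : psiMap (wMap b) (psiMap (⇑b) t) = t := by
  funext j
  show charMap (wMap b j) (psiMap (⇑b) t) = t j
  rw [charMap_psiMap]
  have : (∑ i, wMap b j i • b i) = Pi.single j 1 := b.sum_repr (Pi.single j 1)
  rw [this, charMap_single]

theorem psi_right_inv (t : Fin r → ℂˣ) : psiMap (⇑b) (psiMap (wMap b) t) = t := by
  classical
  funext i
  show charMap (b i) (psiMap (wMap b) t) = t i
  rw [charMap_psiMap]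
  have key : (∑ j, (b i) j • wMap b j) = Pi.single i 1 := by
    set L : (Fin r → ℤ) →ₗ[ℤ] (Fin r → ℤ) :=
      (Finsupp.linearEquivFunOnFinite ℤ ℤ (Fin r)).toLinearMap.comp b.repr.toLinearMap with hL
    have hw : ∀ j, wMap b j = L (Pi.single j 1) := fun j => rfl
    calc (∑ j, (b i) j • wMap b j) = L (∑ j, (b i) j • Pi.single j 1) := by
          simp only [hw, map_sum, map_smul]
      _ = L (b i) := by
          congr 1
          have : ∀ j, (b i) j • (Pi.single j (1 : ℤ) : Fin r → ℤ) = Pi.single j ((b i) j) := by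
            intro j; rw [← Pi.single_smul, smul_eq_mul, mul_one]
          simp only [this, Finset.univ_sum_single]
      _ = Pi.single i 1 := by
          simp only [hL, LinearMap.coe_comp, Function.comp_apply, LinearEquiv.coe_coe,
            Module.Basis.repr_self]
          exact Finsupp.linearEquivFunOnFinite_single ..
  rw [key, charMap_single]

end CharAux

open CharAux in
/-- **Proposition 3.1 (connected components).** For a subgroup `Γ ≤ ℤ^r`, the connected
component of the identity in `T_Γ = {t ∈ (ℂˣ)^r : χ(t) = 1 ∀ χ ∈ Γ}` is exactly
`T_{Γ̄}`; in particular `T_{Γ̄}` is connected. -/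
theorem stmt2 {r : ℕ} (Γ : AddSubgroup (Fin r → ℤ)) :
    connectedComponentIn (torusKer Γ) 1 = torusKer (saturation Γ) ∧
    IsConnected (torusKer (saturation Γ)) := by
  classical
  set N : Submodule ℤ (Fin r → ℤ) := (saturation Γ).toIntSubmodule with hN
  obtain ⟨n, b, bN, f, a, hsnf⟩ := N.smithNormalForm (Pi.basisFun ℤ (Fin r))
  -- `a i ≠ 0`
  have ha : ∀ i, a i ≠ 0 := by
    intro i h0
    apply bN.ne_zero i
    have : ((bN i : Fin r → ℤ)) = 0 := by rw [hsnf i, h0, zero_smul]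
    exact Subtype.ext this
  -- saturation is saturated
  have hsat : ∀ (x : Fin r → ℤ) (m : ℤ), m ≠ 0 → m • x ∈ saturation Γ → x ∈ saturation Γ := by
    rintro x m hm ⟨m', hm', h⟩
    rw [smul_smul] at h
    refine ⟨|m' * m|, abs_pos.mpr (mul_ne_zero (ne_of_gt hm') hm), ?_⟩
    rcases abs_choice (m' * m) with h' | h'
    · rwa [h']
    · rw [h', neg_smul]; exact Γ.neg_mem h
  -- the generators lie in the saturation
  have hgenN : ∀ i, b (f i) ∈ N := by
    intro i
    have h1 : a i • b (f i) ∈ N := by rw [← hsnf i]; exact (bN i).2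
    exact hsat _ _ (ha i) h1
  have hgen : ∀ i, b (f i) ∈ saturation Γ := hgenN
  -- `N` is the span of the generators
  have hNspan : N = Submodule.span ℤ (Set.range fun i => b (f i)) := by
    apply le_antisymm
    · intro x hx
      rw [Submodule.mem_span_range_iff_exists_fun]
      refine ⟨fun i => bN.repr ⟨x, hx⟩ i * a i, ?_⟩
      calc ∑ i, (bN.repr ⟨x, hx⟩ i * a i) • b (f i)
          = ∑ i, bN.repr ⟨x, hx⟩ i • ((bN i : Fin r → ℤ)) := by
            simp only [hsnf, mul_smul]
        _ = ((∑ i, bN.repr ⟨x, hx⟩ i • bN i : N) : Fin r → ℤ) := by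
            push_cast; rfl
        _ = x := by rw [bN.sum_repr ⟨x, hx⟩]
    · rw [Submodule.span_le]
      rintro _ ⟨i, rfl⟩
      exact hgenN i
  -- membership characterization of `torusKer (saturation Γ)`
  have hker_iff : ∀ t : Fin r → ℂˣ,
      t ∈ torusKer (saturation Γ) ↔ ∀ i, charMap (b (f i)) t = 1 := by
    intro t
    constructor
    · intro ht i; exact ht _ (hgen i)
    · intro h χ hχ
      have hχN : χ ∈ N := hχ
      rw [hNspan, Submodule.mem_span_range_iff_exists_fun] at hχN
      obtain ⟨c, hc⟩ := hχN
      rw [← hc, charMap_sum_zsmul]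
      simp [h]
  have hsub : torusKer (saturation Γ) ⊆ torusKer Γ := by
    intro t ht χ hχ
    exact ht χ ⟨1, one_pos, by simpa using hχ⟩
  have h1 : (1 : Fin r → ℂˣ) ∈ torusKer Γ := fun χ _ => charMap_one χ
  have h1s : (1 : Fin r → ℂˣ) ∈ torusKer (saturation Γ) := fun χ _ => charMap_one χ
  -- connectedness of `torusKer (saturation Γ)`
  have hconn : IsConnected (torusKer (saturation Γ)) := by
    have himg : torusKer (saturation Γ) =
        (fun u : Fin r → ℂˣ => psiMap (wMap b) fun j => if j ∈ Set.range f then 1 else u j) '' Set.univ := by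
      ext t
      rw [Set.image_univ, Set.mem_range]
      constructor
      · intro ht
        refine ⟨psiMap (⇑b) t, ?_⟩
        have hfix : (fun j => if j ∈ Set.range f then 1 else psiMap (⇑b) t j)
            = psiMap (⇑b) t := by
          funext j
          split_ifs with hj
          · obtain ⟨i, rfl⟩ := hj
            exact ((hker_iff t).1 ht i).symm
          · rfl
        rw [hfix, psi_left_inv]
      · rintro ⟨u, rfl⟩
        apply (hker_iff _).2
        intro i
        have := congrFun (psi_right_inv b fun j => if j ∈ Set.range f then 1 else u j) (f i)
        calc charMap (b (f i)) (psiMap (wMap b) fun j => if j ∈ Set.range f then 1 else u j)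
            = (if f i ∈ Set.range f then 1 else u (f i)) := this
          _ = 1 := if_pos ⟨i, rfl⟩
    rw [himg]
    refine IsConnected.image isConnected_univ _ (Continuous.continuousOn ?_)
    refine (continuous_psiMap (wMap b)).comp (continuous_pi fun j => ?_)
    by_cases hj : j ∈ Set.range f
    · simpa [hj] using continuous_const
    · simpa [hj] using continuous_apply j
  refine ⟨?_, hconn⟩
  apply Set.Subset.antisymm
  · -- the connected component is contained in `torusKer (saturation Γ)`
    rw [connectedComponentIn_eq_image h1]
    set S : Set (torusKer Γ) := {x | ∀ i, charMap (b (f i)) (x : Fin r → ℂˣ) = 1} with hS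
    have hg : ∀ i, Continuous fun x : torusKer Γ => charMap (b (f i)) (x : Fin r → ℂˣ) :=
      fun i => (continuous_charMap _).comp continuous_subtype_val
    have hSclopen : IsClopen S := by
      have hiS : S = ⋂ i, (fun x : torusKer Γ => charMap (b (f i)) (x : Fin r → ℂˣ)) ⁻¹' {1} := by
        ext x; simp [hS, Set.mem_iInter]
      rw [hiS]
      refine isClopen_iInter_of_finite fun i => ?_
      obtain ⟨m, hm0, hmΓ⟩ := hgen i
      set k : ℕ := m.toNat with hk
      haveI : NeZero k := ⟨by omega⟩
      have hk0 : (k : ℤ) = m := Int.toNat_of_nonneg hm0.le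
      have hmem : ∀ x : torusKer Γ, charMap (b (f i)) (x : Fin r → ℂˣ) ∈ rootsOfUnity k ℂ := by
        intro x
        rw [mem_rootsOfUnity, ← zpow_natCast, hk0, ← charMap_zsmul]
        exact x.2 _ hmΓ
      haveI : Finite ((rootsOfUnity k ℂ : Set ℂˣ) : Type _) :=
        inferInstanceAs (Finite (rootsOfUnity k ℂ))
      have hF : (((rootsOfUnity k ℂ) : Set ℂˣ) \ {1}).Finite :=
        Set.Finite.diff (Set.toFinite _)
      constructor
      · exact IsClosed.preimage (hg i) isClosed_singleton
      · have hpre : (fun x : torusKer Γ => charMap (b (f i)) (x : Fin r → ℂˣ)) ⁻¹' {1}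
            = (fun x : torusKer Γ => charMap (b (f i)) (x : Fin r → ℂˣ)) ⁻¹'
              ((((rootsOfUnity k ℂ) : Set ℂˣ) \ {1})ᶜ) := by
          ext x
          simp only [Set.mem_preimage, Set.mem_singleton_iff, Set.mem_compl_iff, Set.mem_diff]
          constructor
          · intro hx hcon; exact hcon.2 hx
          · intro hx
            by_contra hne
            exact hx ⟨hmem x, hne⟩
        rw [hpre]
        exact (hF.isClosed.isOpen_compl).preimage (hg i)
    have h1S : (⟨1, h1⟩ : torusKer Γ) ∈ S := fun i => charMap_one _
    have hcc : connectedComponent (⟨1, h1⟩ : torusKer Γ) ⊆ S :=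
      hSclopen.connectedComponent_subset h1S
    refine (Set.image_mono hcc).trans ?_
    rintro _ ⟨x, hx, rfl⟩
    exact (hker_iff _).2 hx
  · exact hconn.isPreconnected.subset_connectedComponentIn h1s hsub
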